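/- Let A = (a_{jk}) and B = (b_{jk}) be positive semidefinite N×N complex matrices. Then det(A ⋄ B) ≥ b_{00}^N · det A, where ⋄ denotes the Jury product. Moreover, if B has rank 1, then equality holds: det(A ⋄ B) = b_{00}^N · det A. -/

import Mathlib

open Finset ComplexOrder
open Matrix

section JuryAux

open Matrix

/-- Superadditivity of the geometric mean. -/
private lemma jury_geom_superadd {n : ℕ} (hn : n ≠ 0) (a b : Fin n → ℝ)
    (ha : ∀ i, 0 ≤ a i) (hb : ∀ i, 0 ≤ b i) :
    (∏ i, a i) ^ ((n : ℝ)⁻¹) + (∏ i, b i) ^ ((n : ℝ)⁻¹)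
      ≤ (∏ i, (a i + b i)) ^ ((n : ℝ)⁻¹) := by
  have hab : ∀ i, 0 ≤ a i + b i := fun i => add_nonneg (ha i) (hb i)
  by_cases hpos : ∀ i, 0 < a i + b i
  · have hP : 0 < ∏ i, (a i + b i) := Finset.prod_pos fun i _ => hpos i
    have hPc : 0 < (∏ i, (a i + b i)) ^ ((n : ℝ)⁻¹) := Real.rpow_pos_of_pos hP _
    have hw' : ∑ _i : Fin n, (n : ℝ)⁻¹ = 1 := by
      simp [Finset.sum_const, Finset.card_univ]
      field_simp
    have key : ∀ (c : Fin n → ℝ), (∀ i, 0 ≤ c i) →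
        (∏ i, c i) ^ ((n : ℝ)⁻¹) / (∏ i, (a i + b i)) ^ ((n : ℝ)⁻¹)
          ≤ ∑ i, (n : ℝ)⁻¹ * (c i / (a i + b i)) := by
      intro c hc
      have := Real.geom_mean_le_arith_mean_weighted Finset.univ
        (fun _ => (n : ℝ)⁻¹) (fun i => c i / (a i + b i))
        (fun i _ => by positivity) hw'
        (fun i _ => div_nonneg (hc i) (hab i))
      calc (∏ i, c i) ^ ((n : ℝ)⁻¹) / (∏ i, (a i + b i)) ^ ((n : ℝ)⁻¹)
          = ∏ i, (c i / (a i + b i)) ^ ((n : ℝ)⁻¹) := by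
            rw [← Real.div_rpow (Finset.prod_nonneg fun i _ => hc i)
                (Finset.prod_nonneg fun i _ => hab i),
              ← Finset.prod_div_distrib,
              ← Real.finset_prod_rpow _ _ (fun i _ => div_nonneg (hc i) (hab i))]
        _ ≤ _ := this
    have ka := key a ha
    have kb := key b hb
    have hsum : (∑ i, (n : ℝ)⁻¹ * (a i / (a i + b i)))
        + (∑ i, (n : ℝ)⁻¹ * (b i / (a i + b i))) = 1 := by
      rw [← Finset.sum_add_distrib, ← hw']
      refine Finset.sum_congr rfl fun i _ => ?_
      rw [← mul_add, ← add_div, div_self (hpos i).ne']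
      ring
    have := add_le_add ka kb
    rw [hsum, ← add_div, div_le_one hPc] at this
    exact this
  · push_neg at hpos
    obtain ⟨i, hi⟩ := hpos
    have hai : a i = 0 := le_antisymm (by linarith [hb i]) (ha i)
    have hbi : b i = 0 := le_antisymm (by linarith [ha i]) (hb i)
    have h1 : (∏ j, a j) = 0 := Finset.prod_eq_zero (Finset.mem_univ i) hai
    have h2 : (∏ j, b j) = 0 := Finset.prod_eq_zero (Finset.mem_univ i) hbi
    have hc : ((n : ℝ))⁻¹ ≠ 0 := by positivity
    rw [h1, h2, Real.zero_rpow hc, add_zero]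
    exact Real.rpow_nonneg (Finset.prod_nonneg fun j _ => hab j) _

private lemma jury_psd_det {N : ℕ} {M : Matrix (Fin N) (Fin N) ℂ} (hM : M.PosSemidef) :
    M.det = (M.det.re : ℂ) ∧ 0 ≤ M.det.re := by
  have h := hM.1.det_eq_prod_eigenvalues
  have h2 : M.det = ((∏ i, hM.1.eigenvalues i : ℝ) : ℂ) := by
    rw [h]; norm_cast
  constructor
  · rw [h2, Complex.ofReal_re]
  · rw [h2, Complex.ofReal_re]
    exact Finset.prod_nonneg fun i _ => hM.eigenvalues_nonneg i

private lemma jury_psd_posDef {N : ℕ} {P : Matrix (Fin N) (Fin N) ℂ} (hP : P.PosSemidef)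
    (h : P.det ≠ 0) : P.PosDef := by
  refine Matrix.posDef_iff_dotProduct_mulVec.mpr ⟨hP.1, fun x hx => ?_⟩
  rcases (hP.dotProduct_mulVec_nonneg x).lt_or_eq with h1 | h1
  · exact h1
  · exfalso
    have h2 : P *ᵥ x = 0 := (hP.dotProduct_mulVec_zero_iff x).mp h1.symm
    have hU : IsUnit P := (Matrix.isUnit_iff_isUnit_det P).mpr h.isUnit
    have := Matrix.mulVec_injective_iff_isUnit.mpr hU
    exact hx (this (by simp [h2]))

private lemma jury_psd_smul {N : ℕ} {M : Matrix (Fin N) (Fin N) ℂ} (hM : M.PosSemidef)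
    {c : ℝ} (hc : 0 ≤ c) : ((c : ℂ) • M).PosSemidef := by
  refine Matrix.posSemidef_iff_dotProduct_mulVec.mpr ⟨?_, ?_⟩
  · show ((c : ℂ) • M)ᴴ = (c : ℂ) • M
    rw [Matrix.conjTranspose_smul, hM.1]
    congr 1
    simp [Complex.star_def, Complex.conj_ofReal]
  · intro x
    rw [Matrix.smul_mulVec, dotProduct_smul, smul_eq_mul]
    exact mul_nonneg (by exact_mod_cast Complex.zero_le_real.mpr hc) (hM.dotProduct_mulVec_nonneg x)

private lemma jury_det_add_rpow_of_posDef {N : ℕ} (hN : N ≠ 0)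
    {M P : Matrix (Fin N) (Fin N) ℂ} (hM : M.PosSemidef) (hP : P.PosDef) :
    M.det.re ^ ((N : ℝ)⁻¹) + P.det.re ^ ((N : ℝ)⁻¹) ≤ (M + P).det.re ^ ((N : ℝ)⁻¹) := by
  classical
  open scoped MatrixOrder in set S := CFC.sqrt P with hSdef
  open scoped MatrixOrder in have hS : S.PosSemidef := Matrix.nonneg_iff_posSemidef.mp (CFC.sqrt_nonneg P)
  open scoped MatrixOrder in have hSS : S * S = P := CFC.sqrt_mul_sqrt_self P hP.posSemidef.nonneg
  have hPdet : P.det ≠ 0 := hP.det_pos.ne'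
  have hdetS : S.det ≠ 0 := by
    intro h0
    apply hPdet
    rw [← hSS, Matrix.det_mul, h0, zero_mul]
  have hSU : IsUnit S.det := hdetS.isUnit
  have hSinvH : (S⁻¹)ᴴ = S⁻¹ := by
    rw [Matrix.conjTranspose_nonsing_inv, hS.1]
  set Q := S⁻¹ * M * S⁻¹ with hQdef
  have hQ : Q.PosSemidef := by
    have := hM.mul_mul_conjTranspose_same (S⁻¹)
    rwa [hSinvH] at this
  have hSiS : S⁻¹ * S = 1 := Matrix.nonsing_inv_mul S hSU
  have hSSi : S * S⁻¹ = 1 := Matrix.mul_nonsing_inv S hSU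
  have hMeq : S * Q * S = M := by
    calc S * (S⁻¹ * M * S⁻¹) * S = (S * S⁻¹) * M * (S⁻¹ * S) := by noncomm_ring
      _ = M := by rw [hSiS, hSSi, one_mul, mul_one]
  have hMP : M + P = S * (Q + 1) * S := by
    have : S * (Q + 1) * S = S * Q * S + S * S := by noncomm_ring
    rw [this, hMeq, hSS]
  have hQH := hQ.1
  set μ := hQH.eigenvalues with hμdef
  have hμ : ∀ i, 0 ≤ μ i := fun i => hQ.eigenvalues_nonneg i
  set V : Matrix (Fin N) (Fin N) ℂ :=
    (hQH.eigenvectorUnitary : Matrix (Fin N) (Fin N) ℂ) with hVdef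
  have hVV : V * star V = 1 := (Matrix.mem_unitaryGroup_iff).mp hQH.eigenvectorUnitary.2
  have hspec : Q = V * Matrix.diagonal (RCLike.ofReal ∘ μ) * star V := (hQH.spectral_theorem).trans (by rw [Unitary.conjStarAlgAut_apply])
  have hQ1 : Q + 1 = V * (Matrix.diagonal (fun i => ((μ i : ℂ) + 1))) * star V := by
    have hd : Matrix.diagonal (fun i => ((μ i : ℂ) + 1))
        = Matrix.diagonal (RCLike.ofReal ∘ μ) + 1 := by
      rw [← Matrix.diagonal_one, Matrix.diagonal_add]
      rfl
    rw [hd, mul_add, add_mul, Matrix.mul_one, hVV, ← hspec]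
  have hdetQ1 : (Q + 1).det = ((∏ i, (μ i + 1) : ℝ) : ℂ) := by
    calc (Q + 1).det
        = V.det * (Matrix.diagonal fun i => ((μ i : ℂ) + 1)).det * (star V).det := by
          rw [hQ1, Matrix.det_mul, Matrix.det_mul]
      _ = (Matrix.diagonal fun i => ((μ i : ℂ) + 1)).det * (V * star V).det := by
          rw [Matrix.det_mul]; ring
      _ = ((∏ i, (μ i + 1) : ℝ) : ℂ) := by
          rw [hVV, Matrix.det_one, mul_one, Matrix.det_diagonal]
          push_cast
          rfl
  have hdetQ : Q.det = ((∏ i, μ i : ℝ) : ℂ) := by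
    rw [hQH.det_eq_prod_eigenvalues]; norm_cast
  set p := P.det.re with hpdef
  have hpP : P.det = (p : ℂ) := (jury_psd_det hP.posSemidef).1
  have hp0 : 0 ≤ p := (jury_psd_det hP.posSemidef).2
  have hSdet2 : S.det * S.det = (p : ℂ) := by
    rw [← Matrix.det_mul, hSS, hpP]
  have hdetMP : (M + P).det = ((p * ∏ i, (μ i + 1) : ℝ) : ℂ) := by
    rw [hMP, Matrix.det_mul, Matrix.det_mul]
    rw [show S.det * (Q + 1).det * S.det = (S.det * S.det) * (Q + 1).det by ring]
    rw [hSdet2, hdetQ1]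
    push_cast
    ring
  have hdetM : M.det = ((p * ∏ i, μ i : ℝ) : ℂ) := by
    rw [← hMeq, Matrix.det_mul, Matrix.det_mul]
    rw [show S.det * Q.det * S.det = (S.det * S.det) * Q.det by ring]
    rw [hSdet2, hdetQ]
    push_cast
    ring
  rw [hdetMP, hdetM, hpdef] at *
  rw [show ((p * ∏ i, μ i : ℝ) : ℂ).re = p * ∏ i, μ i from Complex.ofReal_re _]
  rw [show ((p * ∏ i, (μ i + 1) : ℝ) : ℂ).re = p * ∏ i, (μ i + 1) from Complex.ofReal_re _]
  have hprodμ : 0 ≤ ∏ i, μ i := Finset.prod_nonneg fun i _ => hμ i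
  have hprodμ1 : 0 ≤ ∏ i, (μ i + 1) := Finset.prod_nonneg fun i _ => by linarith [hμ i]
  rw [Real.mul_rpow hp0 hprodμ, Real.mul_rpow hp0 hprodμ1]
  have hgeo := jury_geom_superadd hN μ (fun _ => 1) hμ (fun _ => zero_le_one)
  simp only [Finset.prod_const_one, Real.one_rpow] at hgeo
  have hpc : 0 ≤ p ^ ((N : ℝ)⁻¹) := Real.rpow_nonneg hp0 _
  nlinarith [mul_le_mul_of_nonneg_left hgeo hpc]

private lemma jury_det_add_rpow {N : ℕ} (hN : N ≠ 0) {M P : Matrix (Fin N) (Fin N) ℂ}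
    (hM : M.PosSemidef) (hP : P.PosSemidef) :
    M.det.re ^ ((N : ℝ)⁻¹) + P.det.re ^ ((N : ℝ)⁻¹) ≤ (M + P).det.re ^ ((N : ℝ)⁻¹) := by
  have hc : ((N : ℝ))⁻¹ ≠ 0 := by positivity
  by_cases hp : P.det = 0
  · by_cases hm : M.det = 0
    · rw [hp, hm]
      simp only [Complex.zero_re, Real.zero_rpow hc, add_zero]
      exact Real.rpow_nonneg (jury_psd_det (hM.add hP)).2 _
    · have h := jury_det_add_rpow_of_posDef hN hP (jury_psd_posDef hM hm)
      rw [add_comm P M] at h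
      rw [hp]
      simp only [Complex.zero_re, Real.zero_rpow hc, add_zero]
      linarith [Real.rpow_nonneg (jury_psd_det hP).2 ((N : ℝ)⁻¹)]
  · exact jury_det_add_rpow_of_posDef hN hM (jury_psd_posDef hP hp)

private lemma jury_psd_sum {N : ℕ} {ι : Type*} (s : Finset ι)
    (M : ι → Matrix (Fin N) (Fin N) ℂ)
    (h : ∀ i ∈ s, (M i).PosSemidef) : (∑ i ∈ s, M i).PosSemidef :=
  Finset.sum_induction M _ (fun _ _ ha hb => ha.add hb) Matrix.PosSemidef.zero h

private lemma jury_minkowski_sum {N : ℕ} (hN : N ≠ 0) {ι : Type*} (s : Finset ι)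
    (M : ι → Matrix (Fin N) (Fin N) ℂ) (h : ∀ i ∈ s, (M i).PosSemidef) :
    ∑ i ∈ s, (M i).det.re ^ ((N : ℝ)⁻¹) ≤ (∑ i ∈ s, M i).det.re ^ ((N : ℝ)⁻¹) := by
  classical
  haveI : NeZero N := ⟨hN⟩
  induction s using Finset.induction with
  | empty =>
      simp only [Finset.sum_empty]
      rw [Matrix.det_zero]
      simp [Real.zero_rpow (by positivity : ((N : ℝ))⁻¹ ≠ 0)]
  | @insert a s ha ih =>
      rw [Finset.sum_insert ha, Finset.sum_insert ha]
      have h1 : (M a).PosSemidef := h a (Finset.mem_insert_self a s)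
      have h2 : ∀ i ∈ s, (M i).PosSemidef := fun i hi => h i (Finset.mem_insert_of_mem hi)
      calc (M a).det.re ^ ((N : ℝ)⁻¹) + ∑ i ∈ s, (M i).det.re ^ ((N : ℝ)⁻¹)
          ≤ (M a).det.re ^ ((N : ℝ)⁻¹) + (∑ i ∈ s, M i).det.re ^ ((N : ℝ)⁻¹) := by
            linarith [ih h2]
        _ ≤ (M a + ∑ i ∈ s, M i).det.re ^ ((N : ℝ)⁻¹) :=
            jury_det_add_rpow hN h1 (jury_psd_sum s M h2)

/-- The lower-triangular Toeplitz matrix of a vector. -/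
noncomputable def juryToep {N : ℕ} (v : Fin N → ℂ) : Matrix (Fin N) (Fin N) ℂ :=
  Matrix.of fun j m => if m ≤ j then v (j - m) else 0

private lemma juryToep_mul_entry {N : ℕ} (A : Matrix (Fin N) (Fin N) ℂ) (v : Fin N → ℂ)
    (j k : Fin N) :
    (juryToep v * A * (juryToep v)ᴴ) j k
      = ∑ m ∈ Finset.Iic j, ∑ n ∈ Finset.Iic k,
          A m n * (v (j - m) * (starRingEnd ℂ) (v (k - n))) := by
  rw [Matrix.mul_apply]
  simp only [Matrix.conjTranspose_apply, Matrix.mul_apply]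
  rw [← Finset.sum_subset (Finset.subset_univ (Finset.Iic k))
    (fun n _ hn => by
      simp only [Finset.mem_Iic] at hn
      simp [juryToep, hn])]
  calc ∑ n ∈ Finset.Iic k, (∑ m, juryToep v j m * A m n) * star (juryToep v k n)
      = ∑ n ∈ Finset.Iic k, ∑ m ∈ Finset.Iic j,
          A m n * (v (j - m) * (starRingEnd ℂ) (v (k - n))) := by
        refine Finset.sum_congr rfl fun n hn => ?_
        rw [Finset.sum_mul,
          ← Finset.sum_subset (Finset.subset_univ (Finset.Iic j)) (fun m _ hm => by
            simp only [Finset.mem_Iic] at hm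
            simp [juryToep, hm])]
        refine Finset.sum_congr rfl fun m hm => ?_
        simp only [Finset.mem_Iic] at hm hn
        simp only [juryToep, Matrix.of_apply, if_pos hm, if_pos hn]
        rw [Complex.star_def]
        ring
    _ = _ := Finset.sum_comm

private lemma juryToep_det {N : ℕ} [NeZero N] (v : Fin N → ℂ) :
    (juryToep v).det = v 0 ^ N := by
  rw [Matrix.det_of_lowerTriangular _ (by
    intro i j hij
    have : i < j := hij
    simp [juryToep, this.not_ge])]
  simp [juryToep, sub_self]

end JuryAux

/-- The Jury product of two `N × N` complex matrices (indices `0, …, N-1`):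
`(A ⋄ B)_{jk} = ∑_{m=0}^{j} ∑_{n=0}^{k} a_{m,n} b_{j-m,k-n}`. -/
noncomputable def jury {N : ℕ} (A B : Matrix (Fin N) (Fin N) ℂ) :
    Matrix (Fin N) (Fin N) ℂ :=
  Matrix.of fun j k => ∑ m ∈ Finset.Iic j, ∑ n ∈ Finset.Iic k, A m n * B (j - m) (k - n)

/-- For positive semidefinite `A, B ∈ ℂ^{N×N}`, `det (A ⋄ B) ≥ b₀₀^N det A`;
moreover, equality holds if `B` has rank `1`. -/
theorem jury_det_ge_and_rank_one_eq {N : ℕ} [NeZero N] (A B : Matrix (Fin N) (Fin N) ℂ)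
    (hA : A.PosSemidef) (hB : B.PosSemidef) :
    B 0 0 ^ N * A.det ≤ (jury A B).det ∧
      (B.rank = 1 → (jury A B).det = B 0 0 ^ N * A.det) := by
  classical
  have hN : N ≠ 0 := NeZero.ne N
  have hNR : (N : ℝ) ≠ 0 := Nat.cast_ne_zero.mpr hN
  have hH := hB.1
  set lam := hH.eigenvalues with hlam
  have hlam0 : ∀ r, 0 ≤ lam r := fun r => hB.eigenvalues_nonneg r
  set V : Matrix (Fin N) (Fin N) ℂ :=
    (hH.eigenvectorUnitary : Matrix (Fin N) (Fin N) ℂ) with hV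
  have hBentry : ∀ s t : Fin N,
      B s t = ∑ r, ((lam r : ℝ) : ℂ) * (V s r * (starRingEnd ℂ) (V t r)) := by
    intro s t
    conv_lhs => rw [hH.spectral_theorem, Unitary.conjStarAlgAut_apply]
    rw [Matrix.mul_apply]
    refine Finset.sum_congr rfl fun r _ => ?_
    simp only [Matrix.mul_diagonal, Matrix.star_apply, Function.comp_apply]
    have hcast : (RCLike.ofReal (hH.eigenvalues r) : ℂ) = ((lam r : ℝ) : ℂ) := rfl
    rw [hcast, Complex.star_def]
    ring
  set T : Fin N → Matrix (Fin N) (Fin N) ℂ := fun r => juryToep (fun s => V s r) with hT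
  set Mr : Fin N → Matrix (Fin N) (Fin N) ℂ :=
    fun r => ((lam r : ℝ) : ℂ) • (T r * A * (T r)ᴴ) with hMr
  have hjury : jury A B = ∑ r, Mr r := by
    ext j k
    rw [Matrix.sum_apply]
    simp only [hMr, Matrix.smul_apply, smul_eq_mul, hT, juryToep_mul_entry]
    simp only [jury, Matrix.of_apply]
    simp only [hBentry, Finset.mul_sum]
    rw [Finset.sum_comm (s := Finset.univ) (t := Finset.Iic j)]
    refine Finset.sum_congr rfl fun m _ => ?_
    rw [Finset.sum_comm]
    refine Finset.sum_congr rfl fun n _ => ?_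
    refine Finset.sum_congr rfl fun r _ => ?_
    ring
  have hdetMr : ∀ r, (Mr r).det
      = (((lam r * Complex.normSq (V 0 r) : ℝ)) : ℂ) ^ N * A.det := by
    intro r
    simp only [hMr]
    rw [Matrix.det_smul, Matrix.det_mul, Matrix.det_mul, Matrix.det_conjTranspose, hT,
      juryToep_det, Fintype.card_fin, star_pow]
    rw [show ((lam r : ℝ) : ℂ) ^ N * ((V 0 r) ^ N * A.det * (star (V 0 r)) ^ N)
        = (((lam r : ℝ) : ℂ) * (V 0 r * star (V 0 r))) ^ N * A.det by ring]
    congr 2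
    rw [Complex.star_def, Complex.mul_conj]
    push_cast
    ring
  have hpsdMr : ∀ r, (Mr r).PosSemidef :=
    fun r => jury_psd_smul (hA.mul_mul_conjTranspose_same _) (hlam0 r)
  have hB00 : B 0 0 = ((∑ r, lam r * Complex.normSq (V 0 r) : ℝ) : ℂ) := by
    rw [hBentry 0 0]
    push_cast
    refine Finset.sum_congr rfl fun r _ => ?_
    rw [Complex.mul_conj]
  -- the inequality
  have hjpsd : (jury A B).PosSemidef := by
    rw [hjury]; exact jury_psd_sum _ _ (fun r _ => hpsdMr r)
  set c0 := ∑ r, lam r * Complex.normSq (V 0 r) with hc0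
  have hc00 : 0 ≤ c0 :=
    Finset.sum_nonneg fun r _ => mul_nonneg (hlam0 r) (Complex.normSq_nonneg _)
  set a := A.det.re with hadef
  have ha : A.det = (a : ℂ) := (jury_psd_det hA).1
  have ha0 : 0 ≤ a := (jury_psd_det hA).2
  set d := (jury A B).det.re with hddef
  have hd : (jury A B).det = (d : ℂ) := (jury_psd_det hjpsd).1
  have hd0 : 0 ≤ d := (jury_psd_det hjpsd).2
  have hmink := jury_minkowski_sum hN Finset.univ Mr (fun r _ => hpsdMr r)
  rw [← hjury] at hmink
  have hMrre : ∀ r, (Mr r).det.re = (lam r * Complex.normSq (V 0 r)) ^ N * a := by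
    intro r
    rw [hdetMr r, ha, ← Complex.ofReal_pow, ← Complex.ofReal_mul, Complex.ofReal_re]
  have key : c0 * a ^ ((N : ℝ)⁻¹) ≤ d ^ ((N : ℝ)⁻¹) := by
    calc c0 * a ^ ((N : ℝ)⁻¹) = ∑ r, (Mr r).det.re ^ ((N : ℝ)⁻¹) := by
          rw [hc0, Finset.sum_mul]
          refine Finset.sum_congr rfl fun r _ => ?_
          have hx : 0 ≤ lam r * Complex.normSq (V 0 r) :=
            mul_nonneg (hlam0 r) (Complex.normSq_nonneg _)
          rw [hMrre r, Real.mul_rpow (pow_nonneg hx N) ha0,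
            ← Real.rpow_natCast (lam r * Complex.normSq (V 0 r)) N,
            ← Real.rpow_mul hx, mul_inv_cancel₀ hNR, Real.rpow_one]
      _ ≤ d ^ ((N : ℝ)⁻¹) := hmink
  have h2 := pow_le_pow_left₀ (mul_nonneg hc00 (Real.rpow_nonneg ha0 _)) key N
  have hda : (d ^ ((N : ℝ)⁻¹)) ^ N = d := by
    rw [← Real.rpow_natCast (d ^ ((N : ℝ)⁻¹)) N, ← Real.rpow_mul hd0,
      inv_mul_cancel₀ hNR, Real.rpow_one]
  have haa : (a ^ ((N : ℝ)⁻¹)) ^ N = a := by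
    rw [← Real.rpow_natCast (a ^ ((N : ℝ)⁻¹)) N, ← Real.rpow_mul ha0,
      inv_mul_cancel₀ hNR, Real.rpow_one]
  rw [mul_pow, haa, hda] at h2
  constructor
  · rw [hB00, ha, hd, ← Complex.ofReal_pow, ← Complex.ofReal_mul]
    exact_mod_cast h2
  · intro hrank
    rw [hH.rank_eq_card_non_zero_eigs] at hrank
    obtain ⟨⟨r0, hr0⟩, hall⟩ := Fintype.card_eq_one_iff.mp hrank
    have huniq : ∀ r, lam r ≠ 0 → r = r0 :=
      fun r hr => congrArg Subtype.val (hall ⟨r, hr⟩)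
    have hMrzero : ∀ r, r ≠ r0 → Mr r = 0 := by
      intro r hr
      have hl : lam r = 0 := by
        by_contra h
        exact hr (huniq r h)
      simp [hMr, hl]
    have hsum : ∑ r, Mr r = Mr r0 :=
      Finset.sum_eq_single r0 (fun r _ hr => hMrzero r hr)
        (fun h => absurd (Finset.mem_univ r0) h)
    have hB00' : B 0 0 = (((lam r0 * Complex.normSq (V 0 r0) : ℝ)) : ℂ) := by
      rw [hB00]
      congr 1
      refine Finset.sum_eq_single r0 (fun r _ hr => ?_)
        (fun h => absurd (Finset.mem_univ r0) h)
      have hl : lam r = 0 := by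
        by_contra h
        exact hr (huniq r h)
      rw [hl, zero_mul]
    rw [hjury, hsum, hdetMr r0, hB00']
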